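/- If the exponential polynomial E_𝒞 belongs to the Hermite–Biehler class ℍ𝔹, then D_d(𝒞) ≠ 0. -/

import Mathlib

open Complex Matrix Filter Topology
open scoped ComplexOrder

noncomputable section

def Lv (d : ℕ) : ℤ := if Even d then d / 2 else d

def rv (d : ℕ) : ℤ := if Even d then 1 else 2

/-- The coefficient of `T^k` in `f_𝒞(T) = Σ_{j=0}^d C_{-(L-rj)} T^{d-j}` is `C_{L-rk}`. -/
def coeffC (d : ℕ) (C : ℤ → ℂ) : ℕ → ℂ := fun k => C (Lv d - rv d * k)

def SCM (a : ℕ → ℂ) (d n : ℕ) : Matrix (Fin n) (Fin n) ℂ :=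
  Matrix.of fun j k => if (j : ℕ) ≤ (k : ℕ) then a (d - ((k : ℕ) - (j : ℕ))) else 0

def SCN (a : ℕ → ℂ) (n : ℕ) : Matrix (Fin n) (Fin n) ℂ :=
  Matrix.of fun j k => if (j : ℕ) ≤ (k : ℕ) then a ((k : ℕ) - (j : ℕ)) else 0

def SCL (a : ℕ → ℂ) (d n : ℕ) (ε : ℂ) : Matrix (Fin n ⊕ Fin n) (Fin n ⊕ Fin n) ℂ :=
  Matrix.fromBlocks (SCM a d n)ᵀ (ε • (SCN a n)ᴴ) (ε • SCN a n)
    ((SCM a d n).map (starRingEnd ℂ))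

def SCD (d : ℕ) (C : ℤ → ℂ) (n : ℕ) : ℂ :=
  if n = 0 then 1 else (SCL (coeffC d C) d n 1).det


/-- The exponential polynomial `E_𝒞(z) = Σ_{j=0}^d C_{L-rj} e^{i(L-rj)z}`. -/
def Ecal (d : ℕ) (C : ℤ → ℂ) : ℂ → ℂ := fun z =>
  ∑ j ∈ Finset.range (d + 1),
    C (Lv d - rv d * j) * Complex.exp (Complex.I * ((Lv d - rv d * j : ℤ) : ℂ) * z)

/-- `E^♯(z) = conj(E(conj z))`. -/
def sharp (E : ℂ → ℂ) : ℂ → ℂ := fun z => (starRingEnd ℂ) (E ((starRingEnd ℂ) z))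


/-- The Hermite–Biehler class: `|E^♯(z)| < |E(z)|` on the upper half-plane and no real zeros. -/
def HBclass (E : ℂ → ℂ) : Prop :=
  (∀ z : ℂ, 0 < z.im → ‖sharp E z‖ < ‖E z‖) ∧
  (∀ x : ℝ, E (x : ℂ) ≠ 0)

section Aux
open Polynomial

lemma rv_pos (d : ℕ) : 0 < rv d := by unfold rv; split <;> norm_num

lemma two_Lv (d : ℕ) : rv d * d = 2 * Lv d := by
  unfold rv Lv; split_ifs with h
  · obtain ⟨m, rfl⟩ := h; push_cast; omega
  · ring

/-- `g(T) = Σ a_k T^k` with `a = coeffC d C`. -/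
def gpoly (d : ℕ) (C : ℤ → ℂ) : Polynomial ℂ :=
  ∑ k ∈ Finset.range (d + 1), Polynomial.C (coeffC d C k) * Polynomial.X ^ k

/-- `g*(T) = Σ conj(a_{d-k}) T^k`. -/
def gspoly (d : ℕ) (C : ℤ → ℂ) : Polynomial ℂ :=
  ∑ k ∈ Finset.range (d + 1),
    Polynomial.C ((starRingEnd ℂ) (coeffC d C (d - k))) * Polynomial.X ^ k

lemma coeff_gpoly (d : ℕ) (C : ℤ → ℂ) (m : ℕ) :
    (gpoly d C).coeff m = if m ≤ d then coeffC d C m else 0 := by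
  unfold gpoly
  rw [Polynomial.finset_sum_coeff]
  simp only [Polynomial.coeff_C_mul, Polynomial.coeff_X_pow, mul_ite, mul_one, mul_zero]
  rw [Finset.sum_ite_eq (Finset.range (d+1)) m (fun k => coeffC d C k)]
  simp [Nat.lt_succ_iff]

lemma coeff_gspoly (d : ℕ) (C : ℤ → ℂ) (m : ℕ) :
    (gspoly d C).coeff m = if m ≤ d then (starRingEnd ℂ) (coeffC d C (d - m)) else 0 := by
  unfold gspoly
  rw [Polynomial.finset_sum_coeff]
  simp only [Polynomial.coeff_C_mul, Polynomial.coeff_X_pow, mul_ite, mul_one, mul_zero]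
  rw [Finset.sum_ite_eq (Finset.range (d+1)) m
    (fun k => (starRingEnd ℂ) (coeffC d C (d - k)))]
  simp [Nat.lt_succ_iff]

lemma eval_gpoly (d : ℕ) (C : ℤ → ℂ) (w : ℂ) :
    (gpoly d C).eval w = ∑ k ∈ Finset.range (d + 1), coeffC d C k * w ^ k := by
  unfold gpoly; simp [Polynomial.eval_finset_sum]

lemma eval_gspoly (d : ℕ) (C : ℤ → ℂ) (w : ℂ) :
    (gspoly d C).eval w = ∑ k ∈ Finset.range (d + 1),
      (starRingEnd ℂ) (coeffC d C (d - k)) * w ^ k := by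
  unfold gspoly; simp [Polynomial.eval_finset_sum]

lemma Ecal_eq (d : ℕ) (C : ℤ → ℂ) (z : ℂ) :
    Ecal d C z = Complex.exp (Complex.I * (Lv d : ℂ) * z) *
      (gpoly d C).eval (Complex.exp (-(Complex.I * (rv d : ℂ) * z))) := by
  rw [eval_gpoly]
  unfold Ecal coeffC
  rw [Finset.mul_sum]
  refine Finset.sum_congr rfl fun j hj => ?_
  rw [← Complex.exp_nat_mul]
  have : Complex.exp (Complex.I * ((Lv d - rv d * j : ℤ) : ℂ) * z)
      = Complex.exp (Complex.I * (Lv d : ℂ) * z) *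
        Complex.exp ((j : ℂ) * -(Complex.I * (rv d : ℂ) * z)) := by
    rw [← Complex.exp_add]; congr 1; push_cast; ring
  rw [this]; ring

lemma sharp_Ecal_eq (d : ℕ) (C : ℤ → ℂ) (z : ℂ) :
    sharp (Ecal d C) z = Complex.exp (Complex.I * (Lv d : ℂ) * z) *
      (gspoly d C).eval (Complex.exp (-(Complex.I * (rv d : ℂ) * z))) := by
  rw [eval_gspoly]
  unfold sharp Ecal coeffC
  rw [map_sum, Finset.mul_sum]
  rw [← Finset.sum_range_reflect (fun k => Complex.exp (Complex.I * (Lv d : ℂ) * z) *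
        ((starRingEnd ℂ) (C (Lv d - rv d * ((d - k : ℕ) : ℤ))) *
          Complex.exp (-(Complex.I * (rv d : ℂ) * z)) ^ k)) (d + 1)]
  refine Finset.sum_congr rfl fun j hj => ?_
  have hjd : j ≤ d := by simpa [Nat.lt_succ_iff] using hj
  have h1 : d + 1 - 1 - j = d - j := by omega
  have h2 : d - (d - j) = j := by omega
  simp only [h1, h2]
  have hrd : ((rv d : ℤ) : ℂ) * (d : ℂ) = 2 * ((Lv d : ℤ) : ℂ) := by
    exact_mod_cast congrArg (fun t : ℤ => (t : ℂ)) (two_Lv d)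
  have key : Complex.exp ((starRingEnd ℂ)
        (Complex.I * ((Lv d - rv d * j : ℤ) : ℂ) * (starRingEnd ℂ) z))
      = Complex.exp (Complex.I * (Lv d : ℂ) * z) *
        Complex.exp (((d - j : ℕ) : ℂ) * -(Complex.I * (rv d : ℂ) * z)) := by
    rw [← Complex.exp_add]
    congr 1
    have hc : (starRingEnd ℂ) (Complex.I * ((Lv d - rv d * j : ℤ) : ℂ) * (starRingEnd ℂ) z)
        = -Complex.I * ((Lv d - rv d * j : ℤ) : ℂ) * z := by
      simp [_root_.map_mul, Complex.conj_I]
    rw [hc]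
    push_cast [hjd]
    push_cast at hrd
    linear_combination Complex.I * z * hrd
  rw [_root_.map_mul, ← Complex.exp_conj, key, ← Complex.exp_nat_mul]
  ring

lemma exists_z (d : ℕ) (w : ℂ) (hw : w ≠ 0) :
    ∃ z : ℂ, Complex.exp (-(Complex.I * (rv d : ℂ) * z)) = w ∧
      z.im = Real.log ‖w‖ / (rv d : ℝ) := by
  have hr : ((rv d : ℤ) : ℂ) ≠ 0 := by exact_mod_cast (rv_pos d).ne'
  refine ⟨Complex.I * Complex.log w / ((rv d : ℤ) : ℂ), ?_, ?_⟩
  · rw [show -(Complex.I * ((rv d : ℤ) : ℂ) * (Complex.I * Complex.log w / ((rv d : ℤ) : ℂ)))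
        = -(Complex.I * Complex.I) * Complex.log w * (((rv d : ℤ) : ℂ) / ((rv d : ℤ) : ℂ)) by ring]
    rw [div_self hr, Complex.I_mul_I]
    simpa using Complex.exp_log hw
  · rw [show ((rv d : ℤ) : ℂ) = ((rv d : ℝ) : ℂ) by push_cast; ring]
    rw [Complex.div_ofReal_im]
    simp [Complex.log_re]

lemma hb_lt (d : ℕ) (C : ℤ → ℂ) (hHB : HBclass (Ecal d C)) (w : ℂ)
    (hw : 1 < ‖w‖) :
    ‖(gspoly d C).eval w‖ < ‖(gpoly d C).eval w‖ := by
  have hw0 : w ≠ 0 := by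
    intro h; rw [h] at hw; simp at hw; linarith
  obtain ⟨z, hz1, hz2⟩ := exists_z d w hw0
  have him : 0 < z.im := by
    rw [hz2]
    apply div_pos (Real.log_pos hw)
    exact_mod_cast rv_pos d
  have := hHB.1 z him
  rw [Ecal_eq, sharp_Ecal_eq, hz1, norm_mul, norm_mul] at this
  exact lt_of_mul_lt_mul_left this (norm_nonneg _)

lemma hb_circle (d : ℕ) (C : ℤ → ℂ) (hHB : HBclass (Ecal d C)) (w : ℂ)
    (hw : ‖w‖ = 1) :
    (gpoly d C).eval w ≠ 0 := by
  have hw0 : w ≠ 0 := by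
    intro h; rw [h] at hw; simp at hw
  obtain ⟨z, hz1, hz2⟩ := exists_z d w hw0
  have him : z.im = 0 := by rw [hz2, hw]; simp
  have hzre : ((z.re : ℝ) : ℂ) = z := by
    apply Complex.ext <;> simp [him]
  have hE := hHB.2 z.re
  rw [hzre, Ecal_eq, hz1] at hE
  intro h
  exact hE (by rw [h, mul_zero])

lemma g_ne_zero_of_abs_ge (d : ℕ) (C : ℤ → ℂ) (hHB : HBclass (Ecal d C)) (w : ℂ)
    (hw : 1 ≤ ‖w‖) : (gpoly d C).eval w ≠ 0 := by
  rcases eq_or_lt_of_le hw with h | h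
  · exact hb_circle d C hHB w h.symm
  · intro h0
    have h1 := hb_lt d C hHB w h
    rw [h0] at h1
    simp only [norm_zero] at h1
    exact (norm_nonneg _).not_gt h1

lemma coeffC_d (d : ℕ) (C : ℤ → ℂ) : coeffC d C d = C (-(Lv d)) := by
  unfold coeffC; congr 1; have := two_Lv d; omega

lemma coeffC_zero (d : ℕ) (C : ℤ → ℂ) : coeffC d C 0 = C (Lv d) := by
  unfold coeffC; simp

lemma gpoly_ne_zero (d : ℕ) (C : ℤ → ℂ) (hCd : C (-(Lv d)) ≠ 0) : gpoly d C ≠ 0 := by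
  intro h
  have h2 := coeff_gpoly d C d
  rw [h] at h2
  simp only [Polynomial.coeff_zero, le_refl, if_true, coeffC_d] at h2
  exact hCd h2.symm

lemma natDegree_gpoly (d : ℕ) (C : ℤ → ℂ) (hCd : C (-(Lv d)) ≠ 0) :
    (gpoly d C).natDegree = d := by
  apply le_antisymm
  · rw [Polynomial.natDegree_le_iff_coeff_eq_zero]
    intro m hm
    rw [coeff_gpoly, if_neg (by omega)]
  · apply Polynomial.le_natDegree_of_ne_zero
    rw [coeff_gpoly, if_pos le_rfl, coeffC_d]
    exact hCd

lemma gspoly_eval_eq (d : ℕ) (C : ℤ → ℂ) (w : ℂ) (hw : w ≠ 0) :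
    (gspoly d C).eval w
      = w ^ d * (starRingEnd ℂ) ((gpoly d C).eval (((starRingEnd ℂ) w)⁻¹)) := by
  rw [eval_gspoly, eval_gpoly, map_sum, Finset.mul_sum]
  rw [← Finset.sum_range_reflect (fun k => w ^ d *
        (starRingEnd ℂ) (coeffC d C k * (((starRingEnd ℂ) w)⁻¹) ^ k)) (d + 1)]
  refine Finset.sum_congr rfl fun j hj => ?_
  have hjd : j ≤ d := by simpa [Nat.lt_succ_iff] using hj
  have h1 : d + 1 - 1 - j = d - j := by omega
  simp only [h1]
  rw [_root_.map_mul, map_pow, map_inv₀, Complex.conj_conj]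
  have hps : w ^ j * w ^ (d - j) = w ^ d := by
    rw [← pow_add]; congr 1; omega
  have hwp : w ^ (d - j) ≠ 0 := pow_ne_zero _ hw
  field_simp [inv_pow]
  rw [← hps]
  rw [div_pow, one_pow, mul_assoc _ (w ^ j * w ^ (d - j)), mul_assoc (w ^ j), mul_one_div_cancel hwp, mul_one]

lemma eval_zero_gpoly (d : ℕ) (C : ℤ → ℂ) : (gpoly d C).eval 0 = C (Lv d) := by
  rw [← Polynomial.coeff_zero_eq_eval_zero, coeff_gpoly, if_pos (Nat.zero_le d), coeffC_zero]

lemma no_common_root (d : ℕ) (C : ℤ → ℂ) (hHB : HBclass (Ecal d C))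
    (hC0 : C (Lv d) ≠ 0) (w : ℂ) (hg : (gpoly d C).eval w = 0) :
    (gspoly d C).eval w ≠ 0 := by
  have habs : ‖w‖ < 1 := by
    by_contra h
    push_neg at h
    exact g_ne_zero_of_abs_ge d C hHB w h hg
  have hw0 : w ≠ 0 := by
    intro h
    rw [h, eval_zero_gpoly] at hg
    exact hC0 hg
  rw [gspoly_eval_eq d C w hw0]
  apply mul_ne_zero (pow_ne_zero _ hw0)
  rw [ne_eq, _root_.map_eq_zero]
  apply g_ne_zero_of_abs_ge d C hHB
  rw [norm_inv, Complex.norm_conj]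
  rw [one_le_inv_iff₀]
  constructor
  · exact norm_pos_iff.mpr hw0
  · exact le_of_lt habs

lemma coprime_g_gs (d : ℕ) (C : ℤ → ℂ) (hHB : HBclass (Ecal d C))
    (hC0 : C (Lv d) ≠ 0) (hCd : C (-(Lv d)) ≠ 0) :
    IsCoprime (gpoly d C) (gspoly d C) := by
  by_contra hcop
  have hne : EuclideanDomain.gcd (gpoly d C) (gspoly d C) ≠ 0 := by
    intro h
    rw [EuclideanDomain.gcd_eq_zero_iff] at h
    exact gpoly_ne_zero d C hCd h.1
  have hnu : ¬ IsUnit (EuclideanDomain.gcd (gpoly d C) (gspoly d C)) := by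
    intro h
    exact hcop (EuclideanDomain.gcd_isUnit_iff.mp h)
  have hdeg := Polynomial.degree_pos_of_ne_zero_of_nonunit hne hnu
  obtain ⟨z, hz⟩ := Complex.exists_root hdeg
  have h1 : (gpoly d C).eval z = 0 :=
    Polynomial.eval_eq_zero_of_dvd_of_eval_eq_zero
      (EuclideanDomain.gcd_dvd_left _ _) hz
  have h2 : (gspoly d C).eval z = 0 :=
    Polynomial.eval_eq_zero_of_dvd_of_eval_eq_zero
      (EuclideanDomain.gcd_dvd_right _ _) hz
  exact no_common_root d C hHB hC0 z h1 h2

open Polynomial in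
lemma key_injective (d : ℕ) (hd : 0 < d) (C : ℤ → ℂ)
    (hC0 : C (Lv d) ≠ 0) (hCd : C (-(Lv d)) ≠ 0) (hHB : HBclass (Ecal d C))
    (v : Fin d ⊕ Fin d → ℂ) (hv : (SCL (coeffC d C) d d 1).mulVec v = 0) : v = 0 := by
  classical
  set a : ℕ → ℂ := coeffC d C with ha
  set x : Fin d → ℂ := fun k => v (Sum.inl k) with hx
  set y : Fin d → ℂ := fun k => v (Sum.inr k) with hy
  have hvel : v = Sum.elim x y := by funext s; cases s <;> rfl
  rw [hvel, SCL, one_smul, one_smul, Matrix.fromBlocks_mulVec] at hv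
  set Xr : Polynomial ℂ := ∑ k : Fin d, Polynomial.C (x k) * Polynomial.X ^ (d - 1 - (k : ℕ))
    with hXrdef
  set Yr : Polynomial ℂ := ∑ k : Fin d, Polynomial.C (y k) * Polynomial.X ^ (d - 1 - (k : ℕ))
    with hYrdef
  have hXrdeg : Xr.natDegree ≤ d - 1 := by
    apply Polynomial.natDegree_sum_le_of_forall_le
    intro k _
    exact le_trans (Polynomial.natDegree_C_mul_X_pow_le _ _) (by omega)
  have hYrdeg : Yr.natDegree ≤ d - 1 := by
    apply Polynomial.natDegree_sum_le_of_forall_le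
    intro k _
    exact le_trans (Polynomial.natDegree_C_mul_X_pow_le _ _) (by omega)
  have hcoeff : ∀ (q : Polynomial ℂ) (c : Fin d → ℂ) (p : ℕ),
      (q * ∑ k : Fin d, Polynomial.C (c k) * Polynomial.X ^ (d - 1 - (k : ℕ))).coeff p
      = ∑ k : Fin d, c k *
          (if d - 1 - (k : ℕ) ≤ p then q.coeff (p - (d - 1 - (k : ℕ))) else 0) := by
    intro q c p
    rw [Finset.mul_sum, Polynomial.finset_sum_coeff]
    refine Finset.sum_congr rfl fun k _ => ?_
    rw [show q * (Polynomial.C (c k) * Polynomial.X ^ (d - 1 - (k : ℕ)))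
        = Polynomial.C (c k) * (q * Polynomial.X ^ (d - 1 - (k : ℕ))) by ring]
    rw [Polynomial.coeff_C_mul, Polynomial.coeff_mul_X_pow']
  have hG : gpoly d C * Xr + gspoly d C * Yr = 0 := by
    apply Polynomial.ext
    intro p
    rw [Polynomial.coeff_zero, Polynomial.coeff_add, hXrdef, hYrdef, hcoeff, hcoeff]
    by_cases hp1 : p < d
    · -- use row (inr j) with j = d - 1 - p
      have hjlt : d - 1 - p < d := by omega
      have h2 : ((SCN a d) *ᵥ x + ((SCM a d d).map (starRingEnd ℂ)) *ᵥ y) ⟨d - 1 - p, hjlt⟩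
          = 0 := by
        have := congrFun hv (Sum.inr ⟨d - 1 - p, hjlt⟩)
        simpa using this
      simp only [Pi.add_apply, Matrix.mulVec, dotProduct, Matrix.map_apply,
        SCN, SCM, Matrix.of_apply, ← starRingEnd_apply] at h2
      refine Eq.trans ?_ h2
      congr 1
      · refine Finset.sum_congr rfl fun k _ => ?_
        have hk := k.2
        by_cases h : d - 1 - (k : ℕ) ≤ p
        · rw [if_pos h, if_pos (show d - 1 - p ≤ (k : ℕ) by omega), coeff_gpoly,
            if_pos (by omega)]
          rw [show p - (d - 1 - (k : ℕ)) = (k : ℕ) - (d - 1 - p) by omega]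
          ring
        · rw [if_neg h, if_neg (show ¬ (d - 1 - p ≤ (k : ℕ)) by omega)]
          simp
      · refine Finset.sum_congr rfl fun k _ => ?_
        have hk := k.2
        by_cases h : d - 1 - (k : ℕ) ≤ p
        · rw [if_pos h, if_pos (show d - 1 - p ≤ (k : ℕ) by omega), coeff_gspoly,
            if_pos (by omega)]
          rw [show p - (d - 1 - (k : ℕ)) = (k : ℕ) - (d - 1 - p) by omega]
          ring
        · rw [if_neg h, if_neg (show ¬ (d - 1 - p ≤ (k : ℕ)) by omega)]
          simp
    · by_cases hp2 : p < 2 * d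
      · -- use row (inl j) with j = 2d - 1 - p
        have hjlt : 2 * d - 1 - p < d := by omega
        have h1 : ((SCM a d d)ᵀ *ᵥ x + (SCN a d)ᴴ *ᵥ y) ⟨2 * d - 1 - p, hjlt⟩ = 0 := by
          have := congrFun hv (Sum.inl ⟨2 * d - 1 - p, hjlt⟩)
          simpa using this
        simp only [Pi.add_apply, Matrix.mulVec, dotProduct, Matrix.transpose_apply,
          Matrix.conjTranspose_apply, SCN, SCM, Matrix.of_apply, ← starRingEnd_apply] at h1
        refine Eq.trans ?_ h1
        congr 1
        · refine Finset.sum_congr rfl fun k _ => ?_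
          have hk := k.2
          rw [if_pos (show d - 1 - (k : ℕ) ≤ p by omega), coeff_gpoly]
          by_cases h : (k : ℕ) ≤ 2 * d - 1 - p
          · rw [if_pos (by omega), if_pos h,
              show p - (d - 1 - (k : ℕ)) = d - ((2 * d - 1 - p) - (k : ℕ)) by omega]
            ring
          · rw [if_neg (by omega), if_neg h]
            simp
        · refine Finset.sum_congr rfl fun k _ => ?_
          have hk := k.2
          rw [if_pos (show d - 1 - (k : ℕ) ≤ p by omega), coeff_gspoly]
          by_cases h : (k : ℕ) ≤ 2 * d - 1 - p
          · rw [if_pos (by omega), if_pos h,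
              show p - (d - 1 - (k : ℕ)) = d - ((2 * d - 1 - p) - (k : ℕ)) by omega,
              show d - (d - ((2 * d - 1 - p) - (k : ℕ))) = (2 * d - 1 - p) - (k : ℕ) by omega]
            ring
          · rw [if_neg (by omega), if_neg h]
            simp
      · -- degree too large
        push_neg at hp1 hp2
        rw [← hcoeff, ← hcoeff, ← hXrdef, ← hYrdef]
        have hda : (gpoly d C).natDegree ≤ d := by
          rw [natDegree_gpoly d C hCd]
        have hdb : (gspoly d C).natDegree ≤ d := by
          rw [Polynomial.natDegree_le_iff_coeff_eq_zero]
          intro m hm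
          rw [coeff_gspoly, if_neg (by omega)]
        have e1 : (gpoly d C * Xr).natDegree < p :=
          lt_of_le_of_lt Polynomial.natDegree_mul_le (by omega)
        have e2 : (gspoly d C * Yr).natDegree < p :=
          lt_of_le_of_lt Polynomial.natDegree_mul_le (by omega)
        rw [Polynomial.coeff_eq_zero_of_natDegree_lt e1,
          Polynomial.coeff_eq_zero_of_natDegree_lt e2, add_zero]
  have hcop := coprime_g_gs d C hHB hC0 hCd
  have hdvd : gpoly d C ∣ gspoly d C * Yr :=
    ⟨-Xr, by linear_combination hG⟩
  have hYr : Yr = 0 := by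
    by_contra hY
    have hle := Polynomial.natDegree_le_of_dvd (hcop.dvd_of_dvd_mul_left hdvd) hY
    rw [natDegree_gpoly d C hCd] at hle
    omega
  have hXr : Xr = 0 := by
    have h0 : gpoly d C * Xr = 0 := by
      rw [hYr, mul_zero, add_zero] at hG
      exact hG
    rcases mul_eq_zero.mp h0 with h | h
    · exact absurd h (gpoly_ne_zero d C hCd)
    · exact h
  have hcoeffXr : ∀ k : Fin d, x k = 0 := by
    intro k
    have := congrArg (fun q => Polynomial.coeff q (d - 1 - (k : ℕ))) hXr
    simp only [hXrdef, Polynomial.finset_sum_coeff, Polynomial.coeff_C_mul,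
      Polynomial.coeff_X_pow, Polynomial.coeff_zero, mul_ite, mul_one, mul_zero] at this
    rw [Finset.sum_eq_single k] at this
    · simpa using this
    · intro k' _ hk'
      rw [if_neg]
      have := Fin.val_ne_of_ne hk'
      have h1 := k.2
      have h2 := k'.2
      omega
    · intro h
      exact absurd (Finset.mem_univ k) h
  have hcoeffYr : ∀ k : Fin d, y k = 0 := by
    intro k
    have := congrArg (fun q => Polynomial.coeff q (d - 1 - (k : ℕ))) hYr
    simp only [hYrdef, Polynomial.finset_sum_coeff, Polynomial.coeff_C_mul,
      Polynomial.coeff_X_pow, Polynomial.coeff_zero, mul_ite, mul_one, mul_zero] at this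
    rw [Finset.sum_eq_single k] at this
    · simpa using this
    · intro k' _ hk'
      rw [if_neg]
      have := Fin.val_ne_of_ne hk'
      have h1 := k.2
      have h2 := k'.2
      omega
    · intro h
      exact absurd (Finset.mem_univ k) h
  rw [hvel]
  funext s
  cases s with
  | inl k => simpa using hcoeffXr k
  | inr k => simpa using hcoeffYr k

end Aux



/-- Lemma 3.4 (2): if the exponential polynomial `E_𝒞` belongs to the Hermite–Biehler
class `ℍ𝔹`, then `D_d(𝒞) ≠ 0`. -/
theorem SchurCohn_ne_zero_of_HB
    (d : ℕ) (hd : 0 < d) (C : ℤ → ℂ) (hC : C (Lv d) * C (-(Lv d)) ≠ 0)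
    (hHB : HBclass (Ecal d C)) :
    SCD d C d ≠ 0 := by
  have hC0 : C (Lv d) ≠ 0 := left_ne_zero_of_mul hC
  have hCd : C (-(Lv d)) ≠ 0 := right_ne_zero_of_mul hC
  unfold SCD
  rw [if_neg hd.ne']
  intro hdet
  obtain ⟨v, hv0, hv⟩ := (Matrix.exists_mulVec_eq_zero_iff).mpr hdet
  exact hv0 (key_injective d hd C hC0 hCd hHB v hv)

end
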